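/- A directed graph G on n vertices is a linear neighborhood graph if and only if there exists a labeling ℓ : V(G) → ({0,…,n})² such that for all u, v ∈ V(G): (u,v) ∈ E(G) iff ℓ(u)₁ < ℓ(v)₂. -/
import Mathlib


/-- A directed graph is a linear neighborhood graph if any two in-neighborhoods
are comparable under inclusion, and likewise for out-neighborhoods. -/
def LinearNbhd {n : ℕ} (E : Fin n → Fin n → Prop) : Prop :=
  ∀ u v : Fin n,
    ({w | E u w} ⊆ {w | E v w} ∨ {w | E v w} ⊆ {w | E u w}) ∧
    ({w | E w u} ⊆ {w | E w v} ∨ {w | E w v} ⊆ {w | E w u})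

/-- A directed graph `G` on `n` vertices is a linear neighborhood graph iff
there is a labeling `ℓ : V(G) → {0,…,n}²` with `(u,v) ∈ E(G)` iff
`ℓ(u)₁ < ℓ(v)₂`. -/
theorem stmt_12 (n : ℕ) (E : Fin n → Fin n → Prop) :
    LinearNbhd E ↔
      ∃ ℓ : Fin n → Fin (n + 1) × Fin (n + 1),
        ∀ u v : Fin n, E u v ↔ (ℓ u).1 < (ℓ v).2 := by
  classical
  constructor
  · intro h
    have hle : ∀ s : Set (Fin n), Set.ncard s ≤ n := by
      intro s
      calc Set.ncard s ≤ Set.ncard (Set.univ : Set (Fin n)) :=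
            Set.ncard_le_ncard (Set.subset_univ _) (Set.toFinite _)
        _ = n := by simp [Set.ncard_univ]
    have memo : ∀ u : Fin n, u ∈ {w : Fin n | {x | E u x} ⊆ {x | E w x}} := by
      intro u
      simp only [Set.mem_setOf_eq]
      exact fun x hx => hx
    have ha1 : ∀ u : Fin n,
        1 ≤ Set.ncard {w : Fin n | {x | E u x} ⊆ {x | E w x}} := by
      intro u
      have hpos : 0 < Set.ncard {w : Fin n | {x | E u x} ⊆ {x | E w x}} :=
        (Set.ncard_pos (Set.toFinite _)).mpr ⟨u, memo u⟩
      omega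
    have key : ∀ u v : Fin n, E u v ↔
        Set.ncard {w : Fin n | {x | E u x} ⊆ {x | E w x}} ≤
          Set.ncard {w : Fin n | E w v} := by
      intro u v
      constructor
      · intro huv
        refine Set.ncard_le_ncard ?_ (Set.toFinite _)
        intro w hw
        exact hw huv
      · intro hab
        by_contra huv
        have hsub : {w : Fin n | E w v} ⊂ {w : Fin n | {x | E u x} ⊆ {x | E w x}} := by
          constructor
          · intro x hx
            rcases (h u x).1 with h1 | h1
            · exact h1
            · exact absurd (h1 hx) huv
          · intro hcon
            exact huv (hcon (memo u))
        have := Set.ncard_lt_ncard hsub (Set.toFinite _)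
        omega
    refine ⟨fun u =>
      (⟨Set.ncard {w : Fin n | {x | E u x} ⊆ {x | E w x}} - 1,
          by have := hle {w : Fin n | {x | E u x} ⊆ {x | E w x}}; omega⟩,
       ⟨Set.ncard {w : Fin n | E w u},
          by have := hle {w : Fin n | E w u}; omega⟩), ?_⟩
    intro u v
    rw [key u v]
    have h1 := ha1 u
    simp only [Fin.lt_def]
    omega
  · rintro ⟨ℓ, hℓ⟩ u v
    constructor
    · rcases le_total (ℓ u).1 (ℓ v).1 with hc | hc
      · right
        intro w hw
        exact (hℓ u w).2 (lt_of_le_of_lt hc ((hℓ v w).1 hw))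
      · left
        intro w hw
        exact (hℓ v w).2 (lt_of_le_of_lt hc ((hℓ u w).1 hw))
    · rcases le_total (ℓ u).2 (ℓ v).2 with hc | hc
      · left
        intro w hw
        exact (hℓ w v).2 (lt_of_lt_of_le ((hℓ w u).1 hw) hc)
      · right
        intro w hw
        exact (hℓ w u).2 (lt_of_lt_of_le ((hℓ w v).1 hw) hc)
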